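/- Let F(n) denote the number of ordered factorizations of n into factors ≥ 2 (counting n itself as one factorization for n ≥ 2, and F(1) = 1). Then for real s > ρ₁, where ρ₁ > 1 is the unique real number with ζ(ρ₁) = 2, the Dirichlet series ∑_{n≥1} F(n) n^{-s} converges and equals 1/(2 − ζ(s)). -/

import Mathlib

open Finset Real ENNReal

namespace Stmt7Aux


/-- number of ordered factorizations of `n` into exactly `k` factors, each ≥ 2 -/
def G : ℕ → ℕ → ℕ
  | 0, n => if n = 1 then 1 else 0
  | (k+1), n => ∑ d ∈ n.divisors.filter (fun d => 1 < d), G k (n / d)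

lemma G_zero_of_lt : ∀ k n, n < 2 ^ k → G k n = 0 := by
  intro k
  induction k with
  | zero =>
    intro n hn
    interval_cases n
    simp [G]
  | succ k ih =>
    intro n hn
    rw [G]
    refine Finset.sum_eq_zero fun d hd => ?_
    simp only [Finset.mem_filter, Nat.mem_divisors] at hd
    refine ih _ ?_
    have h2 : 2 ≤ d := hd.2
    have : n / d ≤ n / 2 := Nat.div_le_div_left h2 (by norm_num)
    refine lt_of_le_of_lt this ?_
    rw [Nat.div_lt_iff_lt_mul (by norm_num)]
    calc n < 2 ^ (k+1) := hn
      _ = 2 ^ k * 2 := by ring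

lemma G_zero_of_le {k n : ℕ} (h : n ≤ k) : G k n = 0 :=
  G_zero_of_lt k n (lt_of_le_of_lt h (Nat.lt_two_pow_self))

lemma F_eq (F : ℕ → ℝ) (hF1 : F 1 = 1)
    (hFrec : ∀ n : ℕ, 2 ≤ n →
      F n = ∑ d ∈ n.divisors.filter (fun d => 1 < d), F (n / d)) :
    ∀ n : ℕ, 1 ≤ n → F n = ∑ k ∈ range n, (G k n : ℝ) := by
  intro n
  induction n using Nat.strong_induction_on with
  | _ n ih =>
    intro hn
    rcases eq_or_lt_of_le hn with h1 | h2
    · simp [← h1, hF1, G]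
    · -- 2 ≤ n
      have h2 : 2 ≤ n := h2
      rw [hFrec n h2]
      have key : ∀ d ∈ n.divisors.filter (fun d => 1 < d),
          F (n / d) = ∑ k ∈ range n, (G k (n / d) : ℝ) := by
        intro d hd
        simp only [Finset.mem_filter, Nat.mem_divisors] at hd
        have hd2 : 2 ≤ d := hd.2
        have hn0 : 0 < n := by omega
        have hdvd := hd.1.1
        have hlt : n / d < n := Nat.div_lt_self hn0 (by omega)
        have hpos : 1 ≤ n / d :=
          Nat.one_le_div_iff (by omega) |>.mpr (Nat.le_of_dvd hn0 hdvd)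
        rw [ih _ hlt hpos]
        refine Finset.sum_subset (Finset.range_subset_range.mpr hlt.le) ?_
        intro k _ hk
        simp only [Finset.mem_range, not_lt] at hk
        rw [G_zero_of_le hk, Nat.cast_zero]
      rw [Finset.sum_congr rfl key, Finset.sum_comm]
      have step : ∀ k, (∑ d ∈ n.divisors.filter (fun d => 1 < d), (G k (n / d) : ℝ))
          = (G (k+1) n : ℝ) := by
        intro k
        rw [G]
        push_cast
        ring
      rw [Finset.sum_congr rfl fun k _ => step k]
      have h0 : (G 0 n : ℝ) = 0 := by
        simp [G, show n ≠ 1 by omega]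
      have := Finset.sum_range_succ' (fun j => (G j n : ℝ)) n
      -- this : ∑ j in range (n+1), G j n = (∑ i in range n, G (i+1) n) + G 0 n
      rw [Finset.sum_range_succ (fun j => (G j n : ℝ)) n] at this
      rw [G_zero_of_le (le_refl n)] at this
      push_cast at this
      linarith [this]



noncomputable def A (s : ℝ) (n : ℕ) : ℝ≥0∞ :=
  if n = 0 then 0 else ENNReal.ofReal ((n : ℝ) ^ (-s))

lemma A_mul (s : ℝ) (d m : ℕ) : A s (d * m) = A s d * A s m := by
  rcases eq_or_ne d 0 with rfl | hd
  · simp [A]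
  rcases eq_or_ne m 0 with rfl | hm
  · simp [A]
  have hdm : d * m ≠ 0 := Nat.mul_ne_zero hd hm
  simp only [A, hd, hm, hdm, if_neg, Nat.cast_mul, if_false]
  rw [Real.mul_rpow (Nat.cast_nonneg d) (Nat.cast_nonneg m),
    ENNReal.ofReal_mul (Real.rpow_nonneg (Nat.cast_nonneg d) _)]

/-- key Dirichlet convolution identity in `ℝ≥0∞` -/
lemma tsum_conv (f h : ℕ → ℝ≥0∞) (hf : f 0 = 0) (hh : h 0 = 0) :
    ∑' n : ℕ, ∑ p ∈ n.divisorsAntidiagonal, f p.1 * h p.2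
      = (∑' n, f n) * (∑' n, h n) := by
  have hprod : (∑' n, f n) * (∑' n, h n) = ∑' p : ℕ × ℕ, f p.1 * h p.2 := by
    symm
    rw [ENNReal.tsum_prod']
    simp_rw [ENNReal.tsum_mul_left]
    rw [ENNReal.tsum_mul_right]
  rw [hprod, ← ENNReal.tsum_fiberwise (fun p : ℕ × ℕ => f p.1 * h p.2)
    (fun p => p.1 * p.2)]
  congr 1
  ext n
  rcases eq_or_ne n 0 with rfl | hn
  · rw [Nat.divisorsAntidiagonal_zero, Finset.sum_empty]
    symm
    refine (ENNReal.summable.tsum_eq_zero_iff).mpr ?_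
    rintro ⟨⟨a, b⟩, hab⟩
    simp only [Set.mem_preimage, Set.mem_singleton_iff, Nat.mul_eq_zero] at hab
    rcases hab with rfl | rfl
    · simp [hf]
    · simp [hh]
  · have hset : ((fun p : ℕ × ℕ => p.1 * p.2) ⁻¹' {n}) = ↑(n.divisorsAntidiagonal) := by
      ext p
      simp [Nat.mem_divisorsAntidiagonal, hn]
    rw [hset, Finset.tsum_subtype' n.divisorsAntidiagonal fun p => f p.1 * h p.2]

noncomputable def T (s : ℝ) : ℝ≥0∞ := ∑' n : ℕ, (if 1 < n then A s n else 0)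

lemma A_one (s : ℝ) : A s 1 = 1 := by
  simp [A]

lemma A_zero (s : ℝ) : A s 0 = 0 := by simp [A]

lemma A_div_mul {s : ℝ} {d n : ℕ} (hd : d ∣ n) (hd0 : d ≠ 0) :
    A s d * A s (n / d) = A s n := by
  rw [← A_mul, Nat.mul_div_cancel' hd]

lemma Lser (s : ℝ) : ∀ k : ℕ, ∑' n : ℕ, (G k n : ℝ≥0∞) * A s n = (T s) ^ k := by
  intro k
  induction k with
  | zero =>
    rw [pow_zero]
    rw [tsum_eq_single 1 (fun n hn => by simp [G, hn])]
    simp [G, A_one]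
  | succ k ih =>
    have key : ∀ n : ℕ, (G (k+1) n : ℝ≥0∞) * A s n
        = ∑ p ∈ n.divisorsAntidiagonal,
            (if 1 < p.1 then A s p.1 else 0) * ((G k p.2 : ℝ≥0∞) * A s p.2) := by
      intro n
      rcases eq_or_ne n 0 with rfl | hn
      · simp [A_zero]
      rw [Nat.sum_divisorsAntidiagonal
        (f := fun d m => (if 1 < d then A s d else 0) * ((G k m : ℝ≥0∞) * A s m))]
      have : ∀ d ∈ n.divisors,
          (if 1 < d then A s d else 0) * ((G k (n/d) : ℝ≥0∞) * A s (n/d))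
            = if 1 < d then (G k (n/d) : ℝ≥0∞) * A s n else 0 := by
        intro d hd
        rw [Nat.mem_divisors] at hd
        by_cases h1 : 1 < d
        · have hd0 : d ≠ 0 := by omega
          rw [if_pos h1, if_pos h1, ← A_div_mul hd.1 hd0]
          ring
        · rw [if_neg h1, if_neg h1, zero_mul]
      rw [Finset.sum_congr rfl this, Finset.sum_ite, Finset.sum_const_zero, add_zero,
        ← Finset.sum_mul, G]
      push_cast
      rfl
    calc ∑' n : ℕ, (G (k+1) n : ℝ≥0∞) * A s n
        = ∑' n : ℕ, ∑ p ∈ n.divisorsAntidiagonal,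
            (if 1 < p.1 then A s p.1 else 0) * ((G k p.2 : ℝ≥0∞) * A s p.2) :=
          tsum_congr key
      _ = (∑' n : ℕ, (if 1 < n then A s n else 0))
            * ∑' n : ℕ, (G k n : ℝ≥0∞) * A s n := by
          refine tsum_conv (fun m => if 1 < m then A s m else 0)
            (fun m => (G k m : ℝ≥0∞) * A s m) ?_ ?_
          · simp
          · simp [A_zero]
      _ = T s ^ (k+1) := by rw [ih, T, pow_succ]; ring


end Stmt7Aux

open Stmt7Aux

/-- If `F(n)` counts ordered factorizations (with `F(1) = 1` and the divisor recurrence),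
and `ρ₁ > 1` is the real number with `ζ(ρ₁) = 2`, then for real `s > ρ₁` the Dirichlet
series `∑ F(n) n^{-s}` converges to `1/(2 − ζ(s))`. -/
theorem stmt_7 (F : ℕ → ℝ) (hF1 : F 1 = 1)
    (hFrec : ∀ n : ℕ, 2 ≤ n →
      F n = ∑ d ∈ n.divisors.filter (fun d => 1 < d), F (n / d))
    (ρ₁ : ℝ) (hρ₁ : 1 < ρ₁)
    (hζρ₁ : ∑' n : ℕ, ((n + 1 : ℝ) ^ (-ρ₁)) = 2)
    (s : ℝ) (hs : ρ₁ < s) :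
    Summable (fun n : ℕ => F (n + 1) * ((n + 1 : ℝ) ^ (-s))) ∧
      (∑' n : ℕ, F (n + 1) * ((n + 1 : ℝ) ^ (-s)))
        = 1 / (2 - ∑' n : ℕ, ((n + 1 : ℝ) ^ (-s))) := by
  have hs1 : 1 < s := hρ₁.trans hs
  -- summability of shifted zeta series
  have hZsum : ∀ σ : ℝ, 1 < σ → Summable (fun n : ℕ => ((n : ℝ) + 1) ^ (-σ)) := by
    intro σ hσ
    have h0 : Summable (fun n : ℕ => (n : ℝ) ^ (-σ)) :=
      Real.summable_nat_rpow.mpr (by linarith)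
    have := (summable_nat_add_iff 1).mpr h0
    refine this.congr fun n => ?_
    push_cast
    ring_nf
  have hYsum : ∀ σ : ℝ, 1 < σ → Summable (fun n : ℕ => ((n : ℝ) + 2) ^ (-σ)) := by
    intro σ hσ
    have := (summable_nat_add_iff 1).mpr (hZsum σ hσ)
    refine this.congr fun n => ?_
    push_cast
    ring_nf
  set Y : ℝ → ℝ := fun σ => ∑' n : ℕ, ((n : ℝ) + 2) ^ (-σ) with hY
  -- the full zeta sum splits as 1 + Y
  have hsplit : ∀ σ : ℝ, 1 < σ → (∑' n : ℕ, ((n : ℝ) + 1) ^ (-σ)) = 1 + Y σ := by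
    intro σ hσ
    have := Summable.tsum_eq_zero_add (hZsum σ hσ)
    rw [this]
    have e : ∀ b : ℕ, ((↑(b+1) : ℝ) + 1) ^ (-σ) = ((b : ℝ) + 2) ^ (-σ) := by
      intro b; push_cast; ring_nf
    rw [tsum_congr e]
    norm_num [Real.one_rpow]
    rfl
  -- Y ρ₁ = 1
  have hYρ : Y ρ₁ = 1 := by
    have := hsplit ρ₁ hρ₁
    rw [hζρ₁] at this
    linarith
  -- Y is pointwise ≥ 0 and Y s < Y ρ₁ = 1
  have hYpos : 0 ≤ Y s := tsum_nonneg fun n => Real.rpow_nonneg (by positivity) _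
  have hYlt : Y s < 1 := by
    rw [← hYρ]
    refine Summable.tsum_lt_tsum_of_nonneg (fun n => Real.rpow_nonneg (by positivity) _)
      (fun n => ?_) (i := 0) ?_ (hYsum ρ₁ hρ₁)
    · have hb : (1 : ℝ) < (n : ℝ) + 2 := by
        have : (0:ℝ) ≤ (n:ℝ) := Nat.cast_nonneg n
        linarith
      exact (Real.rpow_le_rpow_left_iff hb).mpr (by linarith)
    · have hb : (1 : ℝ) < ((0:ℕ) : ℝ) + 2 := by norm_num
      exact (Real.rpow_lt_rpow_left_iff hb).mpr (by linarith)
  -- identification of T s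
  have hT : T s = ENNReal.ofReal (Y s) := by
    rw [T]
    have h1 := tsum_eq_zero_add' (f := fun n : ℕ => if 1 < n then A s n else 0)
      ENNReal.summable
    rw [h1]
    simp only [show ¬(1 < 0) from by omega, if_neg, if_false]
    have h2 := tsum_eq_zero_add' (f := fun n : ℕ => if 1 < n + 1 then A s (n + 1) else 0)
      ENNReal.summable
    rw [h2]
    simp only [show ¬(1 < 0 + 1) from by omega, if_neg, if_false, zero_add]
    have h3 : ∀ n : ℕ, (if 1 < n + 1 + 1 then A s (n + 1 + 1) else 0)
        = ENNReal.ofReal (((n : ℝ) + 2) ^ (-s)) := by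
      intro n
      rw [if_pos (by omega)]
      rw [show A s (n+1+1) = ENNReal.ofReal ((((n:ℕ)+1+1 : ℕ) : ℝ) ^ (-s)) from
        if_neg (by omega)]
      congr 2
      push_cast
      ring
    rw [tsum_congr h3, ← ENNReal.ofReal_tsum_of_nonneg
      (fun n => Real.rpow_nonneg (by positivity) _) (hYsum s hs1)]
  have hTlt : T s < 1 := by
    rw [hT]
    calc ENNReal.ofReal (Y s) < ENNReal.ofReal 1 := by
          rw [ENNReal.ofReal_lt_ofReal_iff (by norm_num)]; exact hYlt
      _ = 1 := ENNReal.ofReal_one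
  have h1T : (1 : ℝ≥0∞) - T s = ENNReal.ofReal (1 - Y s) := by
    rw [hT, ENNReal.ofReal_sub 1 hYpos, ENNReal.ofReal_one]
  -- the ENNReal-valued series of F
  set FE : ℕ → ℝ≥0∞ := fun n => ((∑ k ∈ range n, G k n : ℕ) : ℝ≥0∞) * A s n with hFE
  have hFEtot : ∑' n : ℕ, FE n = (1 - T s)⁻¹ := by
    have step1 : ∀ n : ℕ, FE n = ∑' k : ℕ, (G k n : ℝ≥0∞) * A s n := by
      intro n
      rw [hFE]
      simp only []
      rw [Nat.cast_sum, Finset.sum_mul]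
      refine (tsum_eq_sum ?_).symm
      intro k hk
      rw [Finset.mem_range, not_lt] at hk
      rcases Nat.eq_zero_or_pos n with rfl | hn
      · rw [A_zero, mul_zero]
      · rw [G_zero_of_le hk, Nat.cast_zero, zero_mul]
    calc ∑' n : ℕ, FE n = ∑' n : ℕ, ∑' k : ℕ, (G k n : ℝ≥0∞) * A s n :=
          tsum_congr step1
      _ = ∑' k : ℕ, ∑' n : ℕ, (G k n : ℝ≥0∞) * A s n := ENNReal.tsum_comm
      _ = ∑' k : ℕ, (T s) ^ k := tsum_congr fun k => Lser s k
      _ = (1 - T s)⁻¹ := ENNReal.tsum_geometric (T s)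
  -- identify FE (n+1) with the real terms
  have hFeq := F_eq F hF1 hFrec
  have hterm : ∀ n : ℕ, ENNReal.ofReal (F (n + 1) * ((n + 1 : ℝ) ^ (-s))) = FE (n + 1) := by
    intro n
    have hF : F (n + 1) = ((∑ k ∈ range (n+1), G k (n+1) : ℕ) : ℝ) := by
      rw [hFeq (n+1) (by omega)]
      push_cast
      rfl
    rw [hF, hFE]
    simp only []
    rw [ENNReal.ofReal_mul (by positivity)]
    congr 1
    · exact ENNReal.ofReal_natCast _
    · rw [show A s (n+1) = ENNReal.ofReal (((n+1 : ℕ) : ℝ) ^ (-s)) from if_neg (by omega)]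
      congr 2
      push_cast
      ring
  have hFE0 : FE 0 = 0 := by simp [hFE]
  have hshift : ∑' n : ℕ, FE (n + 1) = (1 - T s)⁻¹ := by
    have := tsum_eq_zero_add' (f := FE) ENNReal.summable
    rw [hFE0, zero_add] at this
    rw [← this, hFEtot]
  have hfin : (1 - T s)⁻¹ ≠ ⊤ := by
    rw [h1T]
    rw [ne_eq, ENNReal.inv_eq_top]
    rw [← ne_eq, ← pos_iff_ne_zero, ENNReal.ofReal_pos]
    linarith
  have hterm_ne_top : ∀ n : ℕ, FE (n + 1) ≠ ⊤ := by
    intro n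
    rw [← hterm n]
    exact ENNReal.ofReal_ne_top
  have hnonneg : ∀ n : ℕ, 0 ≤ F (n + 1) * ((n + 1 : ℝ) ^ (-s)) := by
    intro n
    have hF : F (n + 1) = ((∑ k ∈ range (n+1), G k (n+1) : ℕ) : ℝ) := by
      rw [hFeq (n+1) (by omega)]; push_cast; rfl
    rw [hF]
    positivity
  constructor
  · have hsum : Summable (fun n => (FE (n+1)).toReal) :=
      ENNReal.summable_toReal (by rw [hshift]; exact hfin)
    refine hsum.congr fun n => ?_
    rw [← hterm n, ENNReal.toReal_ofReal (hnonneg n)]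
  · have : (∑' n : ℕ, F (n + 1) * ((n + 1 : ℝ) ^ (-s)))
        = (∑' n : ℕ, FE (n + 1)).toReal := by
      rw [ENNReal.tsum_toReal_eq hterm_ne_top]
      refine tsum_congr fun n => ?_
      rw [← hterm n, ENNReal.toReal_ofReal (hnonneg n)]
    rw [this, hshift, h1T, ENNReal.toReal_inv, ENNReal.toReal_ofReal (by linarith)]
    rw [hsplit s hs1]
    rw [one_div]
    congr 1
    ring
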